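/- Existence of the merged particle value when the merging particles coincide in space: Let f be C^2 with f'' > 0 on the range of u1, u2, u3, u4. Let x1 < x2 < x4 and suppose the two particles to be merged are both at x2 (x2 = x3 = x23). Then there exists u23 between u2 and u3 such that (x2 − x1)·a(u1,u23) + (x4 − x2)·a(u23,u4) = (x2 − x1)·a(u1,u2) + (x4 − x2)·a(u3,u4). -/

import Mathlib

open Set MeasureTheory intervalIntegral

noncomputable def nlAvgExt (f : ℝ → ℝ) (u1 u2 : ℝ) : ℝ :=
  if u1 = u2 then u1 else
    (∫ u in u1..u2, deriv (deriv f) u * u) / (∫ u in u1..u2, deriv (deriv f) u)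

/-- average with respect to an arbitrary weight function -/
noncomputable def myAvg (g : ℝ → ℝ) (a b : ℝ) : ℝ :=
  if a = b then a else (∫ u in a..b, g u * u) / (∫ u in a..b, g u)

lemma nlAvgExt_eq_myAvg (f : ℝ → ℝ) (a b : ℝ) :
    nlAvgExt f a b = myAvg (deriv (deriv f)) a b := rfl

section aux

variable {g : ℝ → ℝ} {uL uU : ℝ} (hg : Continuous g)
  (hpos : ∀ u ∈ Set.Icc uL uU, 0 < g u)

lemma myAvg_symm (g : ℝ → ℝ) (a b : ℝ) : myAvg g a b = myAvg g b a := by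
  rcases eq_or_ne a b with rfl | hab
  · rfl
  · rw [myAvg, myAvg, if_neg hab, if_neg hab.symm,
      intervalIntegral.integral_symm b a, intervalIntegral.integral_symm b a, neg_div_neg_eq]

include hg hpos in
lemma integral_g_pos {a b : ℝ} (ha : a ∈ Set.Icc uL uU) (hb : b ∈ Set.Icc uL uU)
    (hab : a < b) : 0 < ∫ u in a..b, g u := by
  refine intervalIntegral_pos_of_pos_on (hg.intervalIntegrable a b) (fun x hx => ?_) hab
  exact hpos x ⟨le_trans ha.1 hx.1.le, le_trans hx.2.le hb.2⟩

include hg hpos in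
lemma integral_g_ne {a b : ℝ} (ha : a ∈ Set.Icc uL uU) (hb : b ∈ Set.Icc uL uU)
    (hab : a ≠ b) : (∫ u in a..b, g u) ≠ 0 := by
  rcases hab.lt_or_gt with h | h
  · exact (integral_g_pos hg hpos ha hb h).ne'
  · rw [intervalIntegral.integral_symm]
    exact neg_ne_zero.mpr (integral_g_pos hg hpos hb ha h).ne'

include hg hpos in
lemma myAvg_mem_uIcc {a b : ℝ} (ha : a ∈ Set.Icc uL uU) (hb : b ∈ Set.Icc uL uU) :
    myAvg g a b ∈ Set.uIcc a b := by
  have key : ∀ a b : ℝ, a ∈ Set.Icc uL uU → b ∈ Set.Icc uL uU → a < b →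
      myAvg g a b ∈ Set.Icc a b := by
    intro a b ha hb hab
    have hD : 0 < ∫ u in a..b, g u := integral_g_pos hg hpos ha hb hab
    have hnn : ∀ x ∈ Set.Icc a b, 0 ≤ g x := fun x hx =>
      (hpos x ⟨le_trans ha.1 hx.1, le_trans hx.2 hb.2⟩).le
    have hint1 : IntervalIntegrable (fun u => g u * u) volume a b :=
      (hg.mul continuous_id).intervalIntegrable a b
    have hlow : a * ∫ u in a..b, g u ≤ ∫ u in a..b, g u * u := by
      have h' : (∫ u in a..b, g u * a) ≤ ∫ u in a..b, g u * u := by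
        refine intervalIntegral.integral_mono_on hab.le
          ((hg.mul continuous_const).intervalIntegrable a b) hint1 (fun x hx => ?_)
        exact mul_le_mul_of_nonneg_left hx.1 (hnn x hx)
      rw [intervalIntegral.integral_mul_const] at h'
      rw [mul_comm]; exact h'
    have hhigh : (∫ u in a..b, g u * u) ≤ b * ∫ u in a..b, g u := by
      have h' : (∫ u in a..b, g u * u) ≤ ∫ u in a..b, g u * b := by
        refine intervalIntegral.integral_mono_on hab.le hint1
          ((hg.mul continuous_const).intervalIntegrable a b) (fun x hx => ?_)
        exact mul_le_mul_of_nonneg_left hx.2 (hnn x hx)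
      rw [intervalIntegral.integral_mul_const] at h'
      rw [mul_comm]; exact h'
    rw [myAvg, if_neg hab.ne]
    constructor
    · rw [le_div_iff₀ hD]; linarith
    · rw [div_le_iff₀ hD]; linarith
  rcases lt_trichotomy a b with h | h | h
  · rw [Set.uIcc_of_le h.le]; exact key a b ha hb h
  · simp [myAvg, h]
  · rw [Set.uIcc_of_ge h.le, myAvg_symm]; exact key b a hb ha h

include hg hpos in
lemma myAvg_continuousOn {c : ℝ} (hc : c ∈ Set.Icc uL uU) :
    ContinuousOn (fun t => myAvg g c t) (Set.Icc uL uU) := by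
  intro t ht
  by_cases htc : t = c
  · subst htc
    have hb : ∀ x ∈ Set.Icc uL uU, dist (myAvg g t x) t ≤ dist x t := by
      intro x hx
      have hmem := myAvg_mem_uIcc hg hpos ht hx
      rw [Set.uIcc_eq_union, Set.mem_union] at hmem
      rw [Real.dist_eq, Real.dist_eq]
      rcases hmem with h | h
      · rw [abs_of_nonneg (by linarith [h.1]), abs_of_nonneg (by linarith [h.1, h.2])]
        linarith [h.2]
      · rw [abs_of_nonpos (by linarith [h.2]), abs_of_nonpos (by linarith [h.1, h.2])]
        linarith [h.1]
    have h0 : Filter.Tendsto (fun x : ℝ => dist x t)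
        (nhdsWithin t (Set.Icc uL uU)) (nhds 0) := by
      have h1 : Filter.Tendsto (fun x : ℝ => dist x t) (nhds t) (nhds (dist t t)) :=
        (continuous_id.dist continuous_const).tendsto t
      simpa using h1.mono_left nhdsWithin_le_nhds
    have htend : Filter.Tendsto (fun x => myAvg g t x)
        (nhdsWithin t (Set.Icc uL uU)) (nhds t) := by
      rw [tendsto_iff_dist_tendsto_zero]
      exact squeeze_zero' (Filter.Eventually.of_forall (fun x => dist_nonneg))
        (eventually_nhdsWithin_of_forall hb) h0
    have ht' : myAvg g t t = t := by simp [myAvg]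
    show Filter.Tendsto (fun x => myAvg g t x) (nhdsWithin t (Set.Icc uL uU)) (nhds (myAvg g t t))
    rw [ht']
    exact htend
  · have hN : Continuous fun s => ∫ u in c..s, g u * u :=
      intervalIntegral.continuous_primitive
        (fun a b => (hg.mul continuous_id).intervalIntegrable a b) c
    have hD : Continuous fun s => ∫ u in c..s, g u :=
      intervalIntegral.continuous_primitive (fun a b => hg.intervalIntegrable a b) c
    have hD0 : (∫ u in c..t, g u) ≠ 0 :=
      integral_g_ne hg hpos hc ht (fun h => htc h.symm)
    have hF : ContinuousAt (fun s => (∫ u in c..s, g u * u) / (∫ u in c..s, g u)) t :=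
      hN.continuousAt.div hD.continuousAt hD0
    have heq : (fun s => (∫ u in c..s, g u * u) / (∫ u in c..s, g u))
        =ᶠ[nhds t] (fun s => myAvg g c s) := by
      filter_upwards [isOpen_ne.mem_nhds htc] with x hx
      rw [myAvg, if_neg (fun h => hx h.symm)]
    exact (hF.congr heq).continuousWithinAt

include hg hpos in
lemma myAvg_monotoneOn {c : ℝ} (hc : c ∈ Set.Icc uL uU) :
    MonotoneOn (fun t => myAvg g c t) (Set.Icc uL uU) := by
  have hderiv : ∀ t ∈ Set.Icc uL uU, t ≠ c →
      DifferentiableAt ℝ (fun s => myAvg g c s) t ∧ 0 ≤ deriv (fun s => myAvg g c s) t := by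
    intro t ht htc
    set N : ℝ → ℝ := fun s => ∫ u in c..s, g u * u with hNdef
    set D : ℝ → ℝ := fun s => ∫ u in c..s, g u with hDdef
    have hNt : HasDerivAt N (g t * t) t :=
      ((hg.mul continuous_id).integral_hasStrictDerivAt c t).hasDerivAt
    have hDt : HasDerivAt D (g t) t := (hg.integral_hasStrictDerivAt c t).hasDerivAt
    have hD0 : D t ≠ 0 := integral_g_ne hg hpos hc ht (Ne.symm htc)
    have hF : HasDerivAt (fun s => N s / D s)
        ((g t * t * D t - N t * g t) / (D t)^2) t := hNt.div hDt hD0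
    have heq : (fun s => myAvg g c s) =ᶠ[nhds t] (fun s => N s / D s) := by
      filter_upwards [isOpen_ne.mem_nhds htc] with x hx
      rw [myAvg, if_neg (fun h => hx h.symm)]
    have hF' : HasDerivAt (fun s => myAvg g c s)
        ((g t * t * D t - N t * g t) / (D t)^2) t := hF.congr_of_eventuallyEq heq
    refine ⟨hF'.differentiableAt, ?_⟩
    rw [hF'.deriv]
    have hkey : t * D t - N t = ∫ u in c..t, g u * (t - u) := by
      have hconst : IntervalIntegrable (fun u : ℝ => g u * t) volume c t :=
        (hg.mul continuous_const).intervalIntegrable c t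
      have hid : IntervalIntegrable (fun u : ℝ => g u * u) volume c t :=
        (hg.mul continuous_id).intervalIntegrable c t
      have hs1 : (∫ u in c..t, (g u * t - g u * u))
          = (∫ u in c..t, g u * t) - ∫ u in c..t, g u * u :=
        intervalIntegral.integral_sub hconst hid
      have hs2 : (∫ u in c..t, g u * (t - u)) = ∫ u in c..t, (g u * t - g u * u) := by
        apply intervalIntegral.integral_congr; intro u _; ring
      rw [hs2, hs1, intervalIntegral.integral_mul_const]
      simp only [hNdef, hDdef]
      ring
    have h1 : 0 ≤ t * D t - N t := by
      rw [hkey]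
      rcases (Ne.symm htc).lt_or_gt with h | h
      · -- c < t
        refine intervalIntegral.integral_nonneg h.le (fun u hu => ?_)
        have hgu : 0 ≤ g u := (hpos u ⟨le_trans hc.1 hu.1, le_trans hu.2 ht.2⟩).le
        have : u ≤ t := hu.2
        nlinarith
      · -- t < c
        rw [intervalIntegral.integral_symm]
        have h2 : (∫ u in t..c, g u * (t - u)) ≤ 0 := by
          have h3 : (∫ u in t..c, g u * (t - u)) ≤ ∫ u in t..c, (0 : ℝ) := by
            refine intervalIntegral.integral_mono_on h.le
              ((hg.mul (continuous_const.sub continuous_id)).intervalIntegrable t c)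
              (intervalIntegrable_const) (fun u hu => ?_)
            have hgu : 0 ≤ g u := (hpos u ⟨le_trans ht.1 hu.1, le_trans hu.2 hc.2⟩).le
            have : t ≤ u := hu.1
            nlinarith
          simpa using h3
        linarith
    have h2 : 0 ≤ g t := (hpos t ht).le
    apply div_nonneg _ (sq_nonneg _)
    nlinarith [mul_nonneg h2 h1]
  have monoR : MonotoneOn (fun t => myAvg g c t) (Set.Icc c uU) := by
    refine monotoneOn_of_deriv_nonneg (convex_Icc c uU)
      ((myAvg_continuousOn hg hpos hc).mono (Set.Icc_subset_Icc hc.1 le_rfl)) ?_ ?_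
    · intro t ht; rw [interior_Icc] at ht
      exact ((hderiv t ⟨le_trans hc.1 ht.1.le, ht.2.le⟩ (ne_of_gt ht.1)).1).differentiableWithinAt
    · intro t ht; rw [interior_Icc] at ht
      exact (hderiv t ⟨le_trans hc.1 ht.1.le, ht.2.le⟩ (ne_of_gt ht.1)).2
  have monoL : MonotoneOn (fun t => myAvg g c t) (Set.Icc uL c) := by
    refine monotoneOn_of_deriv_nonneg (convex_Icc uL c)
      ((myAvg_continuousOn hg hpos hc).mono (Set.Icc_subset_Icc le_rfl hc.2)) ?_ ?_
    · intro t ht; rw [interior_Icc] at ht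
      exact ((hderiv t ⟨ht.1.le, le_trans ht.2.le hc.2⟩ (ne_of_lt ht.2)).1).differentiableWithinAt
    · intro t ht; rw [interior_Icc] at ht
      exact (hderiv t ⟨ht.1.le, le_trans ht.2.le hc.2⟩ (ne_of_lt ht.2)).2
  intro s hs t ht hst
  rcases le_total t c with h | h
  · exact monoL ⟨hs.1, hst.trans h⟩ ⟨ht.1, h⟩ hst
  · rcases le_total s c with h' | h'
    · have hsc : myAvg g c s ≤ c := by
        have hm := myAvg_mem_uIcc hg hpos hc hs
        rw [Set.uIcc_of_ge h'] at hm; exact hm.2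
      have hct : c ≤ myAvg g c t := by
        have hm := myAvg_mem_uIcc hg hpos hc ht
        rw [Set.uIcc_of_le h] at hm; exact hm.1
      exact le_trans hsc hct
    · exact monoR ⟨h', hs.2⟩ ⟨h'.trans hst, ht.2⟩ hst

end aux

theorem merge_value_exists (f : ℝ → ℝ) (uL uU : ℝ) (hf : ContDiff ℝ 2 f)
    (hconv : ∀ u ∈ Set.Icc uL uU, 0 < deriv (deriv f) u)
    (u1 u2 u3 u4 : ℝ) (h1 : u1 ∈ Set.Icc uL uU) (h2 : u2 ∈ Set.Icc uL uU)
    (h3 : u3 ∈ Set.Icc uL uU) (h4 : u4 ∈ Set.Icc uL uU)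
    (x1 x2 x4 : ℝ) (hx12 : x1 < x2) (hx24 : x2 < x4) :
    ∃ u23 ∈ Set.uIcc u2 u3,
      (x2 - x1) * nlAvgExt f u1 u23 + (x4 - x2) * nlAvgExt f u23 u4
        = (x2 - x1) * nlAvgExt f u1 u2 + (x4 - x2) * nlAvgExt f u3 u4 := by
  set g : ℝ → ℝ := deriv (deriv f) with hgdef
  have hg : Continuous g := by
    have h2f : ContDiff ℝ (1 + 1) f := by
      convert hf using 2
      norm_num
    have hd1 : ContDiff ℝ 1 (deriv f) := (contDiff_succ_iff_deriv.mp h2f).2.2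
    exact hd1.continuous_deriv le_rfl
  have hAx : ∀ a b, nlAvgExt f a b = myAvg g a b := fun a b => rfl
  simp only [hAx]
  set φ : ℝ → ℝ := fun t => (x2 - x1) * myAvg g u1 t + (x4 - x2) * myAvg g u4 t with hφdef
  have hsub : Set.uIcc u2 u3 ⊆ Set.Icc uL uU := Set.uIcc_subset_Icc h2 h3
  have hφcont : ContinuousOn φ (Set.uIcc u2 u3) := by
    apply ContinuousOn.add
    · exact continuousOn_const.mul ((myAvg_continuousOn hg hconv h1).mono hsub)
    · exact continuousOn_const.mul ((myAvg_continuousOn hg hconv h4).mono hsub)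
  set T : ℝ := (x2 - x1) * myAvg g u1 u2 + (x4 - x2) * myAvg g u4 u3 with hTdef
  have hT : T ∈ Set.uIcc (φ u2) (φ u3) := by
    rcases le_total u2 u3 with h | h
    · have m1 : myAvg g u1 u2 ≤ myAvg g u1 u3 := myAvg_monotoneOn hg hconv h1 h2 h3 h
      have m2 : myAvg g u4 u2 ≤ myAvg g u4 u3 := myAvg_monotoneOn hg hconv h4 h2 h3 h
      rw [Set.mem_uIcc]
      left
      constructor
      · simp only [hφdef, hTdef]; nlinarith
      · simp only [hφdef, hTdef]; nlinarith
    · have m1 : myAvg g u1 u3 ≤ myAvg g u1 u2 := myAvg_monotoneOn hg hconv h1 h3 h2 h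
      have m2 : myAvg g u4 u3 ≤ myAvg g u4 u2 := myAvg_monotoneOn hg hconv h4 h3 h2 h
      rw [Set.mem_uIcc]
      right
      constructor
      · simp only [hφdef, hTdef]; nlinarith
      · simp only [hφdef, hTdef]; nlinarith
  obtain ⟨u23, hu23, hval⟩ := intermediate_value_uIcc hφcont hT
  refine ⟨u23, hu23, ?_⟩
  have : (x2 - x1) * myAvg g u1 u23 + (x4 - x2) * myAvg g u4 u23 = T := hval
  rw [myAvg_symm g u23 u4, myAvg_symm g u3 u4]
  exact this
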